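/- Let P be a simple d-polytope in E^d and let ε > 0 be such that δ := (1 − γ)/(1 + d) − ε·√d·α > 0. Then P_ε = ⋃_{v ∈ vert(P)} P^v_{ε,δ}. -/

import Mathlib

noncomputable section

open Metric Set Finset Matrix
open scoped RealInnerProductSpace BigOperators Classical

namespace AverkovHenk

abbrev E (d : ℕ) := EuclideanSpace ℝ (Fin d)

/-- Support function `h(P,u)` of `P` in direction `u`. -/
def supp {d : ℕ} (P : Set (E d)) (u : E d) : ℝ :=
  sSup ((fun x => ⟪u, x⟫) '' P)

/-- The normalized affine function `q_F` of the facet with outward unit normal `u`. -/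
def qf {d : ℕ} (P : Set (E d)) (u : E d) (x : E d) : ℝ :=
  (supp P u - ⟪u, x⟫) / Metric.diam P

/-- The exposed face of `P` in direction `u`. -/
def faceOf {d : ℕ} (P : Set (E d)) (u : E d) : Set (E d) :=
  {x ∈ P | ⟪u, x⟫ = supp P u}

/-- `u` is an outward unit normal of a facet (a `(d-1)`-dimensional face) of `P`. -/
def IsFacetNormal {d : ℕ} (P : Set (E d)) (u : E d) : Prop :=
  ‖u‖ = 1 ∧ Module.finrank ℝ ↥(vectorSpan ℝ (faceOf P u)) = d - 1

/-- The vertices of `P`, i.e. its extreme points. -/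
def vertices {d : ℕ} (P : Set (E d)) : Set (E d) := Set.extremePoints ℝ P

/-- The `l`-th elementary symmetric function of `y_1, …, y_m`. -/
def esymm {m : ℕ} (y : Fin m → ℝ) (l : ℕ) : ℝ :=
  ∑ J ∈ Finset.powersetCard l (Finset.univ : Finset (Fin m)), ∏ j ∈ J, y j

/-- A presentation of a convex `d`-polytope `P ⊆ E^d` by the `m` outward unit normals
`u 0, …, u (m-1)` of its facets, together with the induced representation
`P = {x | q_j(x) ≥ 0 for all j}`. -/
structure FacetRep (d m : ℕ) where
  P : Set (E d)
  u : Fin m → E d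
  convex : Convex ℝ P
  compact : IsCompact P
  fulldim : (interior P).Nonempty
  inj : Function.Injective u
  facet : ∀ j, IsFacetNormal P (u j)
  complete : ∀ w : E d, IsFacetNormal P w → ∃ j, w = u j
  rep : P = {x | ∀ j, 0 ≤ qf P (u j) x}

namespace FacetRep

variable {d m : ℕ}

/-- The vector `q(x) = (q_1(x), …, q_m(x))`. -/
def q (R : FacetRep d m) (x : E d) : Fin m → ℝ := fun j => qf R.P (R.u j) x

/-- The indices of the facets containing the point `v`. -/
def act (R : FacetRep d m) (v : E d) : Finset (Fin m) :=
  Finset.univ.filter fun j => R.q v j = 0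

/-- The polytope is simple: each vertex lies on exactly `d` facets. -/
def Simple (R : FacetRep d m) : Prop :=
  ∀ v ∈ vertices R.P, (R.act v).card = d

/-- The enlarged polytope `P_ε`. -/
def Peps (R : FacetRep d m) (ε : ℝ) : Set (E d) := {x | ∀ j, -ε ≤ R.q x j}

/-- The box `Π_{v,ε} = {x : |q_v(x)|_∞ ≤ ε}`. -/
def Piv (R : FacetRep d m) (v : E d) (ε : ℝ) : Set (E d) :=
  {x | ∀ j ∈ R.act v, |R.q x j| ≤ ε}

/-- The cone `C_v = {x : -σ_1(q_v(x)) ≥ (2/3)|q_v(x)|}` (Euclidean norm). -/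
def Cv (R : FacetRep d m) (v : E d) : Set (E d) :=
  {x | (2/3) * Real.sqrt (∑ j ∈ R.act v, (R.q x j)^2) ≤ -(∑ j ∈ R.act v, R.q x j)}

/-- The polytope `P^v_{ε,δ}`. -/
def Pv (R : FacetRep d m) (v : E d) (ε δ : ℝ) : Set (E d) :=
  {x | (∀ j ∈ R.act v, -ε ≤ R.q x j) ∧ ∀ j ∉ R.act v, δ ≤ R.q x j}

/-- `γ = max{1 - q_F(v) : F a facet, v a vertex not on F}`. -/
def gam (R : FacetRep d m) : ℝ :=
  sSup {c | ∃ v ∈ vertices R.P, ∃ j, R.q v j ≠ 0 ∧ c = 1 - R.q v j}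

/-- The polynomial `f_k` built from weights `y_v` over the vertex set `V`. -/
def fk (R : FacetRep d m) (V : Finset (E d)) (y : ↥V → ℝ) (k : ℕ) (x : E d) : ℝ :=
  ∑ v : ↥V, y v * ((∑ j ∈ R.act v.1, (1 - R.q x j)^(2*k)) / (R.act v.1).card)^(2*k)

/-- The matrix `A_k` indexed by the vertex set `V`. -/
def Ak (R : FacetRep d m) (V : Finset (E d)) (k : ℕ) : Matrix ↥V ↥V ℝ :=
  Matrix.of fun w v : ↥V => ((∑ j ∈ R.act v.1, (1 - R.q w.1 j)^(2*k)) / (R.act v.1).card)^(2*k)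

/-- `deg(P)`: the maximal number of facets through a vertex. -/
def degP (R : FacetRep d m) (V : Finset (E d)) : ℕ := V.sup fun v => (R.act v).card

end FacetRep

/-- `|U_s^{-1}|_2` where `U_s` is the matrix with rows `u_j^T`, `j ∈ s`: the supremum of `‖x‖`
over the set where the Euclidean norm of `U_s x` is at most `1`. -/
def invNormU {d m : ℕ} (u : Fin m → E d) (s : Finset (Fin m)) : ℝ :=
  sSup {c | ∃ x : E d, Real.sqrt (∑ j ∈ s, (⟪u j, x⟫)^2) ≤ 1 ∧ c = ‖x‖}

/-- `α = max_{v ∈ vert(P)} |U_v^{-1}|_2`. -/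
def alpha {d m : ℕ} (R : FacetRep d m) (V : Finset (E d)) : ℝ :=
  sSup {a | ∃ v ∈ V, a = invNormU R.u (R.act v)}

/-- The normal cone `N(Q,x) = {u : ⟨x,u⟩ = h(Q,u)}`. -/
def normalCone {d : ℕ} (Q : Set (E d)) (x : E d) : Set (E d) :=
  {u | ⟪u, x⟫ = supp Q u}

/-- `S` is an edge (a 1-dimensional face) of `P`. -/
def IsEdgeOf {d : ℕ} (P S : Set (E d)) : Prop :=
  IsExposed ℝ P S ∧ Module.finrank ℝ ↥(vectorSpan ℝ S) = 1

namespace FacetRep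

variable {d m : ℕ} (R : FacetRep d m)

lemma diam_pos (hd : 1 ≤ d) : 0 < Metric.diam R.P := by
  obtain ⟨z, hz⟩ := R.fulldim
  obtain ⟨r, hr, hball⟩ := Metric.isOpen_iff.1 isOpen_interior z hz
  have hzP : z ∈ R.P := interior_subset hz
  set e : E d := EuclideanSpace.single (⟨0, by omega⟩ : Fin d) (r/2) with he
  have hne : ‖e‖ = r/2 := by
    rw [he, EuclideanSpace.norm_single, Real.norm_eq_abs, abs_of_pos (by linarith)]
  have hz2 : z + e ∈ R.P := by
    apply interior_subset (hball ?_)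
    simp [Metric.mem_ball, dist_self_add_left, hne]
    linarith
  have : dist (z + e) z ≤ Metric.diam R.P :=
    Metric.dist_le_diam_of_mem R.compact.isBounded hz2 hzP
  rw [dist_self_add_left, hne] at this
  linarith

lemma norm_u (j : Fin m) : ‖R.u j‖ = 1 := (R.facet j).1

lemma q_nonneg {y : E d} (hy : y ∈ R.P) (j : Fin m) : 0 ≤ R.q y j := by
  have := R.rep ▸ hy; exact this j

lemma mem_act_iff (y : E d) (j : Fin m) : j ∈ R.act y ↔ R.q y j = 0 := by
  simp [FacetRep.act]

lemma q_pos_of_not_act {y : E d} (hy : y ∈ R.P) {j : Fin m} (hj : j ∉ R.act y) :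
    0 < R.q y j := by
  rcases lt_or_eq_of_le (R.q_nonneg hy j) with h | h
  · exact h
  · exact absurd ((R.mem_act_iff y j).2 h.symm) hj

lemma inner_le_supp (hd : 1 ≤ d) {y : E d} (hy : y ∈ R.P) (j : Fin m) :
    ⟪R.u j, y⟫ ≤ supp R.P (R.u j) := by
  have h := R.q_nonneg hy j
  have hD := R.diam_pos hd
  unfold FacetRep.q qf at h
  by_contra hc
  push_neg at hc
  have : (supp R.P (R.u j) - ⟪R.u j, y⟫) / Metric.diam R.P < 0 :=
    div_neg_of_neg_of_pos (by linarith) hD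
  linarith

lemma act_inner (hd : 1 ≤ d) {y : E d} {j : Fin m} (hj : j ∈ R.act y) :
    ⟪R.u j, y⟫ = supp R.P (R.u j) := by
  have h := (R.mem_act_iff y j).1 hj
  have hD := R.diam_pos hd
  unfold FacetRep.q qf at h
  rcases div_eq_zero_iff.1 h with h' | h'
  · linarith
  · linarith

lemma q_sub (x y : E d) (j : Fin m) :
    R.q x j = R.q y j + ⟪R.u j, y - x⟫ / Metric.diam R.P := by
  unfold FacetRep.q qf
  rw [inner_sub_right, ← add_div]
  ring_nf

lemma q_lower (hd : 1 ≤ d) (x y : E d) (j : Fin m) :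
    R.q y j - ‖x - y‖ / Metric.diam R.P ≤ R.q x j := by
  rw [R.q_sub x y j]
  have hD := R.diam_pos hd
  have h1 : -(‖x - y‖) ≤ ⟪R.u j, y - x⟫ := by
    have := abs_real_inner_le_norm (R.u j) (y - x)
    rw [R.norm_u j, one_mul] at this
    have h2 := neg_le_of_abs_le this
    rwa [← norm_neg, neg_sub] at h2
  have h3 : -(‖x - y‖) / Metric.diam R.P ≤ ⟪R.u j, y - x⟫ / Metric.diam R.P :=
    (div_le_div_iff_of_pos_right hD).2 h1
  rw [neg_div] at h3
  linarith

end FacetRep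
namespace FacetRep

variable {d m : ℕ} (R : FacetRep d m)

lemma mem_P_iff (x : E d) : x ∈ R.P ↔ ∀ j, 0 ≤ R.q x j := by
  constructor
  · exact fun h j => R.q_nonneg h j
  · intro h
    have : x ∈ {x : E d | ∀ j, 0 ≤ qf R.P (R.u j) x} := h
    rw [← R.rep] at this
    exact this

lemma q_combo {ι : Type*} (t : Finset ι) (w : ι → ℝ) (p : ι → E d)
    (hw : ∑ i ∈ t, w i = 1) (j : Fin m) :
    R.q (∑ i ∈ t, w i • p i) j = ∑ i ∈ t, w i * R.q (p i) j := by
  unfold FacetRep.q qf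
  have h1 : ⟪R.u j, ∑ i ∈ t, w i • p i⟫ = ∑ i ∈ t, w i * ⟪R.u j, p i⟫ := by
    rw [inner_sum]
    exact Finset.sum_congr rfl fun i _ => real_inner_smul_right _ _ _
  rw [h1]
  have h2 : ∀ i ∈ t, w i * ((supp R.P (R.u j) - ⟪R.u j, p i⟫) / Metric.diam R.P)
      = (w i * (supp R.P (R.u j) - ⟪R.u j, p i⟫)) / Metric.diam R.P := fun i _ =>
    (mul_div_assoc _ _ _).symm
  rw [Finset.sum_congr rfl h2, ← Finset.sum_div]
  congr 1
  have h3 : ∀ i ∈ t, w i * (supp R.P (R.u j) - ⟪R.u j, p i⟫)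
      = w i * supp R.P (R.u j) - w i * ⟪R.u j, p i⟫ := fun i _ => mul_sub _ _ _
  rw [Finset.sum_congr rfl h3, Finset.sum_sub_distrib, ← Finset.sum_mul, hw, one_mul]

lemma move (hd : 1 ≤ d) {y : E d} (hy : y ∈ R.P) (z : E d)
    (hz : ∀ j ∈ R.act y, ⟪R.u j, z⟫ ≤ 0) : ∃ t : ℝ, 0 < t ∧ y + t • z ∈ R.P := by
  have hD := R.diam_pos hd
  have key : ∀ (t : ℝ), ∀ j, R.q (y + t • z) j
      = R.q y j - t * ⟪R.u j, z⟫ / Metric.diam R.P := by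
    intro t j
    rw [R.q_sub (y + t • z) y j]
    have : y - (y + t • z) = -(t • z) := by abel
    rw [this, inner_neg_right, real_inner_smul_right]
    ring
  have habs : ∀ j (z' : E d), |⟪R.u j, z'⟫| ≤ ‖z'‖ := by
    intro j z'
    have := abs_real_inner_le_norm (R.u j) z'
    rwa [R.norm_u j, one_mul] at this
  set B := Finset.univ.filter (fun j => j ∉ R.act y) with hB
  by_cases hBne : B.Nonempty
  · set c := B.inf' hBne (fun j => R.q y j) with hc
    have hcpos : 0 < c := by
      rw [hc]
      apply (Finset.lt_inf'_iff _).2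
      intro j hj
      exact R.q_pos_of_not_act hy (by simpa [hB] using hj)
    refine ⟨c * Metric.diam R.P / (‖z‖ + 1), by positivity, ?_⟩
    rw [R.mem_P_iff]
    intro j
    rw [key]
    set t := c * Metric.diam R.P / (‖z‖ + 1) with ht
    by_cases hjy : j ∈ R.act y
    · have h1 : ⟪R.u j, z⟫ ≤ 0 := hz j hjy
      have h2 : 0 ≤ R.q y j := R.q_nonneg hy j
      have htpos : (0:ℝ) ≤ t := by positivity
      have h3 : t * ⟪R.u j, z⟫ / Metric.diam R.P ≤ 0 := by
        apply div_nonpos_of_nonpos_of_nonneg _ (le_of_lt hD)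
        exact mul_nonpos_of_nonneg_of_nonpos htpos h1
      linarith
    · have h1 : c ≤ R.q y j := Finset.inf'_le _ (by simp [hB, hjy])
      have htpos : (0:ℝ) ≤ t := by positivity
      have h2 : t * ⟪R.u j, z⟫ / Metric.diam R.P ≤ c := by
        have h3 : t * ⟪R.u j, z⟫ ≤ t * ‖z‖ := by
          nlinarith [le_of_abs_le (habs j z)]
        have h4 : t * ‖z‖ / Metric.diam R.P = c * ‖z‖ / (‖z‖ + 1) := by
          rw [ht]; field_simp
        have h5 : c * ‖z‖ / (‖z‖ + 1) ≤ c := by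
          rw [div_le_iff₀ (by positivity)]
          nlinarith [norm_nonneg z]
        calc t * ⟪R.u j, z⟫ / Metric.diam R.P ≤ t * ‖z‖ / Metric.diam R.P :=
              (div_le_div_iff_of_pos_right hD).2 h3
          _ ≤ c := h4 ▸ h5
      linarith
  · refine ⟨1, one_pos, ?_⟩
    rw [R.mem_P_iff]
    intro j
    rw [key]
    have hjy : j ∈ R.act y := by
      by_contra hcon
      exact hBne ⟨j, by simp [hB, hcon]⟩
    have h1 : ⟪R.u j, z⟫ ≤ 0 := hz j hjy
    have h2 : 0 ≤ R.q y j := R.q_nonneg hy j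
    have h3 : 1 * ⟪R.u j, z⟫ / Metric.diam R.P ≤ 0 :=
      div_nonpos_of_nonpos_of_nonneg (by linarith) (le_of_lt hD)
    linarith

lemma inner_eq_zero_of_act (hd : 1 ≤ d) {v : E d} (hv : v ∈ vertices R.P) {z : E d}
    (hz : ∀ j ∈ R.act v, ⟪R.u j, z⟫ = 0) : z = 0 := by
  by_contra hzne
  have hvP : v ∈ R.P := hv.1
  obtain ⟨t₁, ht₁, hm₁⟩ := R.move hd hvP z (fun j hj => le_of_eq (hz j hj))
  obtain ⟨t₂, ht₂, hm₂⟩ := R.move hd hvP (-z) (fun j hj => by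
    rw [inner_neg_right, hz j hj]; simp)
  have hseg : v ∈ openSegment ℝ (v + t₁ • z) (v + t₂ • (-z)) := by
    refine ⟨t₂ / (t₁ + t₂), t₁ / (t₁ + t₂), by positivity, by positivity, ?_, ?_⟩
    · field_simp
      ring
    · match_scalars <;> field_simp <;> ring
  have h1 := hv.2 hm₁ hm₂ hseg
  have : t₁ • z = 0 := by
    have := congrArg (fun w => w - v) h1
    simpa using this
  rcases smul_eq_zero.1 this with h | h
  · linarith
  · exact hzne h

end FacetRep
section UmapSec

variable {d m : ℕ}

/-- The linear map `x ↦ (⟪u j, x⟫)_{j ∈ s}`. -/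
def Umap (u : Fin m → E d) (s : Finset (Fin m)) :
    E d →ₗ[ℝ] EuclideanSpace ℝ {j // j ∈ s} where
  toFun x := WithLp.toLp 2 (fun j : {j // j ∈ s} => ⟪u j.1, x⟫)
  map_add' x y := by ext j; simp [inner_add_right]
  map_smul' c x := by ext j; simp [inner_smul_right]

lemma Umap_apply (u : Fin m → E d) (s : Finset (Fin m)) (x : E d) (j : {j // j ∈ s}) :
    Umap u s x j = ⟪u j.1, x⟫ := rfl

lemma norm_Umap (u : Fin m → E d) (s : Finset (Fin m)) (x : E d) :
    ‖Umap u s x‖ = Real.sqrt (∑ j ∈ s, (⟪u j, x⟫)^2) := by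
  rw [EuclideanSpace.norm_eq]
  congr 1
  rw [← Finset.sum_coe_sort s (fun j => (⟪u j, x⟫)^2)]
  exact Finset.sum_congr rfl fun j _ => by
    rw [Umap_apply, Real.norm_eq_abs, sq_abs]

lemma invNormU_nonneg (u : Fin m → E d) (s : Finset (Fin m)) : 0 ≤ invNormU u s := by
  apply Real.sSup_nonneg
  rintro c ⟨x, -, rfl⟩
  exact norm_nonneg x

lemma alpha_nonneg (R : FacetRep d m) (V : Finset (E d)) : 0 ≤ alpha R V := by
  apply Real.sSup_nonneg
  rintro c ⟨v, -, rfl⟩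
  exact invNormU_nonneg _ _

lemma invNormU_le_alpha (R : FacetRep d m) (V : Finset (E d)) {v : E d} (hv : v ∈ V) :
    invNormU R.u (R.act v) ≤ alpha R V := by
  apply le_csSup
  · have : {a | ∃ v ∈ V, a = invNormU R.u (R.act v)}
        ⊆ (fun v => invNormU R.u (R.act v)) '' ↑V := by
      rintro a ⟨v, hv, rfl⟩; exact ⟨v, hv, rfl⟩
    exact (V.finite_toSet.image _).subset this |>.bddAbove
  · exact ⟨v, hv, rfl⟩

end UmapSec

namespace FacetRep

variable {d m : ℕ} (R : FacetRep d m)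

lemma Umap_injective (hd : 1 ≤ d) {v : E d} (hv : v ∈ vertices R.P) :
    Function.Injective (Umap R.u (R.act v)) := by
  rw [injective_iff_map_eq_zero]
  intro z hz
  apply R.inner_eq_zero_of_act hd hv
  intro j hj
  simpa [Umap_apply] using congrFun (congrArg WithLp.ofLp hz) ⟨j, hj⟩


lemma Umap_equiv (hd : 1 ≤ d) {v : E d} (hv : v ∈ vertices R.P)
    (hcard : (R.act v).card = d) :
    ∃ e : E d ≃ₗ[ℝ] EuclideanSpace ℝ {j // j ∈ R.act v},
      ∀ x, e x = Umap R.u (R.act v) x := by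
  have hrank : Module.finrank ℝ (E d)
      = Module.finrank ℝ (EuclideanSpace ℝ {j // j ∈ R.act v}) := by
    rw [finrank_euclideanSpace, finrank_euclideanSpace, Fintype.card_fin, Fintype.card_coe, hcard]
  exact ⟨(Umap R.u (R.act v)).linearEquivOfInjective (R.Umap_injective hd hv) hrank,
    fun x => rfl⟩

lemma norm_le_invNormU (hd : 1 ≤ d) {v : E d} (hv : v ∈ vertices R.P)
    (hcard : (R.act v).card = d) (z : E d) :
    ‖z‖ ≤ invNormU R.u (R.act v) * Real.sqrt (∑ j ∈ R.act v, (⟪R.u j, z⟫)^2) := by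
  obtain ⟨e, he⟩ := R.Umap_equiv hd hv hcard
  set C := ‖(LinearMap.toContinuousLinearMap
    (e.symm : EuclideanSpace ℝ {j // j ∈ R.act v} →ₗ[ℝ] E d))‖ with hC
  have hbound : ∀ x : E d, ‖x‖ ≤ C * ‖Umap R.u (R.act v) x‖ := by
    intro x
    have h0 := ContinuousLinearMap.le_opNorm (LinearMap.toContinuousLinearMap
      (e.symm : EuclideanSpace ℝ {j // j ∈ R.act v} →ₗ[ℝ] E d)) (e x)
    have heq : (LinearMap.toContinuousLinearMap
        (e.symm : EuclideanSpace ℝ {j // j ∈ R.act v} →ₗ[ℝ] E d)) (e x) = x := by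
      simp
    rw [heq, ← hC, he] at h0
    exact h0
  have hbdd : BddAbove {c | ∃ x : E d,
      Real.sqrt (∑ j ∈ R.act v, (⟪R.u j, x⟫)^2) ≤ 1 ∧ c = ‖x‖} := by
    refine ⟨C, ?_⟩
    rintro c ⟨x, hx, rfl⟩
    calc ‖x‖ ≤ C * ‖Umap R.u (R.act v) x‖ := hbound x
      _ ≤ C * 1 := by
          apply mul_le_mul_of_nonneg_left _ ?_
          · rw [norm_Umap]; exact hx
          · rw [hC]; exact norm_nonneg _
      _ = C := mul_one C
  by_cases hz : z = 0
  · subst hz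
    simp only [norm_zero]
    exact mul_nonneg (invNormU_nonneg _ _) (Real.sqrt_nonneg _)
  · set N := Real.sqrt (∑ j ∈ R.act v, (⟪R.u j, z⟫)^2) with hN
    have hNnorm : N = ‖Umap R.u (R.act v) z‖ := (norm_Umap _ _ _).symm
    have hNpos : 0 < N := by
      rw [hNnorm, norm_pos_iff]
      intro hc
      exact hz (R.Umap_injective hd hv (by rw [hc, map_zero]))
    have hmem : N⁻¹ * ‖z‖ ∈ {c | ∃ x : E d,
        Real.sqrt (∑ j ∈ R.act v, (⟪R.u j, x⟫)^2) ≤ 1 ∧ c = ‖x‖} := by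
      refine ⟨N⁻¹ • z, le_of_eq ?_, by rw [norm_smul, Real.norm_eq_abs,
        abs_of_pos (by positivity)]⟩
      have h4 : Real.sqrt (∑ j ∈ R.act v, (⟪R.u j, N⁻¹ • z⟫)^2)
          = ‖Umap R.u (R.act v) (N⁻¹ • z)‖ := (norm_Umap _ _ _).symm
      rw [h4, _root_.map_smul, norm_smul, Real.norm_eq_abs, abs_of_pos (by positivity),
        ← hNnorm]
      field_simp
    have hle := le_csSup hbdd hmem
    have : invNormU R.u (R.act v) = sSup {c | ∃ x : E d,
        Real.sqrt (∑ j ∈ R.act v, (⟪R.u j, x⟫)^2) ≤ 1 ∧ c = ‖x‖} := rfl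
    rw [this]
    calc ‖z‖ = N * (N⁻¹ * ‖z‖) := by field_simp
      _ ≤ N * sSup {c | ∃ x : E d,
          Real.sqrt (∑ j ∈ R.act v, (⟪R.u j, x⟫)^2) ≤ 1 ∧ c = ‖x‖} :=
          mul_le_mul_of_nonneg_left hle (le_of_lt hNpos)
      _ = _ := mul_comm _ _

lemma transpose_bound (hd : 1 ≤ d) {v : E d} (hv : v ∈ vertices R.P)
    (hcard : (R.act v).card = d) (μ : Fin m → ℝ) :
    Real.sqrt (∑ j ∈ R.act v, (μ j)^2)
      ≤ invNormU R.u (R.act v) * ‖∑ j ∈ R.act v, μ j • R.u j‖ := by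
  obtain ⟨e, he⟩ := R.Umap_equiv hd hv hcard
  set ν : EuclideanSpace ℝ {j // j ∈ R.act v} := WithLp.toLp 2 (fun j : {j // j ∈ R.act v} => μ j.1) with hν
  have hnormν : ‖ν‖ = Real.sqrt (∑ j ∈ R.act v, (μ j)^2) := by
    rw [EuclideanSpace.norm_eq]
    congr 1
    rw [← Finset.sum_coe_sort (R.act v) (fun j => (μ j)^2)]
    exact Finset.sum_congr rfl fun j _ => by rw [Real.norm_eq_abs, sq_abs]
  set w : E d := ∑ j ∈ R.act v, μ j • R.u j with hw
  obtain ⟨p, hp⟩ : ∃ p, Umap R.u (R.act v) p = ν :=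
    ⟨e.symm ν, by rw [← he]; exact e.apply_symm_apply ν⟩
  have hterm : ∀ j ∈ R.act v, ⟪R.u j, p⟫ = μ j := by
    intro j hj
    have := congrFun (congrArg WithLp.ofLp hp) ⟨j, hj⟩
    exact this
  have hinner : ⟪w, p⟫ = ‖ν‖^2 := by
    rw [hw, sum_inner]
    have h1 : ∀ j ∈ R.act v, ⟪μ j • R.u j, p⟫ = (μ j)^2 := by
      intro j hj
      rw [real_inner_smul_left, hterm j hj]
      ring
    rw [Finset.sum_congr rfl h1, hnormν, Real.sq_sqrt]
    positivity
  by_cases hν0 : ‖ν‖ = 0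
  · rw [← hnormν, hν0]
    exact mul_nonneg (invNormU_nonneg _ _) (norm_nonneg _)
  · have hνpos : 0 < ‖ν‖ := lt_of_le_of_ne (norm_nonneg _) (Ne.symm hν0)
    have h1 : ‖ν‖^2 ≤ ‖w‖ * ‖p‖ := by
      rw [← hinner]; exact real_inner_le_norm w p
    have h2 : ‖p‖ ≤ invNormU R.u (R.act v) * ‖ν‖ := by
      have h3 := R.norm_le_invNormU hd hv hcard p
      have h4 : Real.sqrt (∑ j ∈ R.act v, (⟪R.u j, p⟫)^2) = ‖ν‖ := by
        rw [← norm_Umap, hp]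
      rwa [h4] at h3
    have h3 : ‖ν‖^2 ≤ ‖w‖ * (invNormU R.u (R.act v) * ‖ν‖) :=
      le_trans h1 (mul_le_mul_of_nonneg_left h2 (norm_nonneg w))
    rw [← hnormν]
    nlinarith [norm_nonneg w]

end FacetRep
open scoped Topology

namespace FacetRep

variable {d m : ℕ} (R : FacetRep d m)

lemma interior_slack (hd : 1 ≤ d) :
    ∃ z₀ : E d, ∃ r : ℝ, 0 < r ∧ ∀ j, ⟪R.u j, z₀⟫ + r ≤ supp R.P (R.u j) := by
  obtain ⟨z, hz⟩ := R.fulldim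
  obtain ⟨r, hr, hball⟩ := Metric.isOpen_iff.1 isOpen_interior z hz
  refine ⟨z, r/2, by linarith, fun j => ?_⟩
  have hmem : z + (r/2) • R.u j ∈ R.P := by
    apply interior_subset (hball ?_)
    simp only [Metric.mem_ball, dist_self_add_left, norm_smul, Real.norm_eq_abs,
      abs_of_pos (by linarith : (0:ℝ) < r/2), R.norm_u j, mul_one]
    linarith
  have h1 := R.inner_le_supp hd hmem j
  rw [inner_add_right, real_inner_smul_right] at h1
  have h2 : ⟪R.u j, R.u j⟫ = 1 := by
    rw [real_inner_self_eq_norm_sq, R.norm_u j]; norm_num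
  rw [h2, mul_one] at h1
  linarith

lemma proj_cone (hd : 1 ≤ d) (x : E d) :
    ∃ y ∈ R.P, ∃ μ : Fin m → ℝ, (∀ j, 0 ≤ μ j) ∧
      x - y = ∑ j ∈ R.act y, μ j • R.u j := by
  have hPne : R.P.Nonempty := R.fulldim.mono interior_subset
  have hPcl : IsClosed R.P := R.compact.isClosed
  obtain ⟨y, hyP, hinf⟩ :=
    exists_norm_eq_iInf_of_complete_convex hPne hPcl.isComplete R.convex x
  have hvar : ∀ w ∈ R.P, ⟪x - y, w - y⟫ ≤ 0 :=
    (norm_eq_iInf_iff_real_inner_le_zero R.convex hyP).1 hinf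
  refine ⟨y, hyP, ?_⟩
  set K : ConvexCone ℝ (E d) :=
    { carrier := {z | ∃ μ : Fin m → ℝ, (∀ j, 0 ≤ μ j) ∧ z = ∑ j ∈ R.act y, μ j • R.u j}
      smul_mem' := by
        rintro c hc z ⟨μ, hμ, rfl⟩
        refine ⟨fun j => c * μ j, fun j => mul_nonneg (le_of_lt hc) (hμ j), ?_⟩
        rw [Finset.smul_sum]
        exact Finset.sum_congr rfl fun j _ => smul_smul c (μ j) (R.u j)
      add_mem' := by
        rintro z ⟨μ, hμ, rfl⟩ z' ⟨μ', hμ', rfl⟩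
        refine ⟨fun j => μ j + μ' j, fun j => add_nonneg (hμ j) (hμ' j), ?_⟩
        rw [← Finset.sum_add_distrib]
        exact Finset.sum_congr rfl fun j _ => (add_smul (μ j) (μ' j) (R.u j)).symm } with hK
  have hmemK : ∀ z, z ∈ K ↔ ∃ μ : Fin m → ℝ, (∀ j, 0 ≤ μ j) ∧
      z = ∑ j ∈ R.act y, μ j • R.u j := fun z => Iff.rfl
  have hne : ((K : Set (E d))).Nonempty := ⟨0, ⟨fun _ => 0, fun j => le_refl 0, by simp⟩⟩
  -- a vector with positive inner product with all active normals
  obtain ⟨z₀, r, hr, hslack⟩ := R.interior_slack hd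
  set g : E d := y - z₀ with hg
  have hgj : ∀ j ∈ R.act y, r ≤ ⟪R.u j, g⟫ := by
    intro j hj
    rw [hg, inner_sub_right, R.act_inner hd hj]
    linarith [hslack j]
  -- K is closed
  have hclosed : IsClosed (K : Set (E d)) := by
    apply IsSeqClosed.isClosed
    intro f L hf hL
    have hf' : ∀ n, ∃ μ : Fin m → ℝ, (∀ j, 0 ≤ μ j) ∧ (∀ j ∉ R.act y, μ j = 0) ∧
        f n = ∑ j ∈ R.act y, μ j • R.u j := by
      intro n
      obtain ⟨μ, hμ, hsum⟩ := hf n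
      refine ⟨fun j => if j ∈ R.act y then μ j else 0,
        fun j => by dsimp only; split <;> [exact hμ j; rfl],
        fun j hj => by simp [hj], ?_⟩
      rw [hsum]
      exact Finset.sum_congr rfl fun j hj => by simp [hj]
    choose μs hnn hoff hsum using hf'
    -- uniform bound on the coefficients
    have hbound : ∀ n j, μs n j ≤ ⟪g, f n⟫ / r := by
      intro n j
      by_cases hj : j ∈ R.act y
      · have h1 : ⟪g, f n⟫ = ∑ j' ∈ R.act y, μs n j' * ⟪g, R.u j'⟫ := by
          rw [hsum n, inner_sum]
          exact Finset.sum_congr rfl fun j' _ => real_inner_smul_right _ _ _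
        have hterm : ∀ j' ∈ R.act y, 0 ≤ μs n j' * ⟪g, R.u j'⟫ := by
          intro j' hj'
          exact mul_nonneg (hnn n j') (le_trans (le_of_lt hr)
            (by rw [real_inner_comm]; exact hgj j' hj'))
        have h2 : μs n j * r ≤ ∑ j' ∈ R.act y, μs n j' * ⟪g, R.u j'⟫ := by
          refine le_trans ?_ (Finset.single_le_sum hterm hj)
          apply mul_le_mul_of_nonneg_left _ (hnn n j)
          rw [real_inner_comm]; exact hgj j hj
        rw [le_div_iff₀ hr, h1]
        exact h2
      · rw [hoff n j hj]
        have h1 : 0 ≤ ⟪g, f n⟫ := by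
          rw [hsum n, inner_sum]
          apply Finset.sum_nonneg
          intro j' hj'
          rw [real_inner_smul_right]
          exact mul_nonneg (hnn n j') (le_trans (le_of_lt hr)
            (by rw [real_inner_comm]; exact hgj j' hj'))
        positivity
    have htend : Filter.Tendsto (fun n => ⟪g, f n⟫ / r) Filter.atTop (𝓝 (⟪g, L⟫ / r)) :=
      ((Filter.Tendsto.inner tendsto_const_nhds hL)).div_const r
    obtain ⟨M, hM⟩ := htend.bddAbove_range
    have hM' : ∀ n j, μs n j ≤ max M 0 := fun n j =>
      le_trans (hbound n j) (le_trans (hM (Set.mem_range_self n)) (le_max_left M 0))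
    have hIcc : IsCompact (Set.Icc (0 : Fin m → ℝ) (fun _ => max M 0)) := isCompact_Icc
    have hmem : ∀ n, μs n ∈ Set.Icc (0 : Fin m → ℝ) (fun _ => max M 0) := by
      intro n
      constructor
      · intro j; exact hnn n j
      · intro j; exact hM' n j
    obtain ⟨μlim, hmul, φ, hφ, hconv⟩ := hIcc.tendsto_subseq hmem
    refine ⟨μlim, fun j => hmul.1 j, ?_⟩
    have h1 : Filter.Tendsto (fun n => ∑ j ∈ R.act y, μs (φ n) j • R.u j)
        Filter.atTop (𝓝 (∑ j ∈ R.act y, μlim j • R.u j)) := by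
      apply tendsto_finset_sum
      intro j _
      exact ((tendsto_pi_nhds.1 hconv) j).smul_const (R.u j)
    have h2 : Filter.Tendsto (fun n => f (φ n)) Filter.atTop (𝓝 L) :=
      hL.comp (hφ.tendsto_atTop)
    have h3 : (fun n => f (φ n)) = fun n => ∑ j ∈ R.act y, μs (φ n) j • R.u j := by
      funext n; exact hsum (φ n)
    rw [h3] at h2
    exact tendsto_nhds_unique h2 h1
  -- Farkas / separation
  by_contra hxK
  have hxK' : x - y ∉ K := fun hc => hxK ((hmemK _).1 hc)
  obtain ⟨ζ, hζ1, hζ2⟩ :=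
    ProperCone.hyperplane_separation' (⟨K.toPointedCone ((hmemK 0).2 ⟨fun _ => 0, fun _ => le_refl 0, by simp⟩), hclosed⟩ : ProperCone ℝ (E d)) hxK'
  have huK : ∀ j ∈ R.act y, (R.u j) ∈ K := by
    intro j hj
    refine (hmemK _).2 ⟨fun j' => if j' = j then 1 else 0, fun j' => by positivity, ?_⟩
    rw [Finset.sum_eq_single_of_mem j hj (fun b _ hb => by simp [hb])]
    simp
  have hζ3 : ∀ j ∈ R.act y, ⟪R.u j, -ζ⟫ ≤ 0 := by
    intro j hj
    rw [inner_neg_right]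
    have := hζ1 (R.u j) (huK j hj)
    linarith
  obtain ⟨t, ht, hmem⟩ := R.move hd hyP (-ζ) hζ3
  have h4 := hvar _ hmem
  have h5 : y + t • -ζ - y = t • -ζ := by abel
  rw [h5, inner_smul_right, inner_neg_right] at h4
  have h6 : 0 ≤ ⟪x - y, ζ⟫ := by nlinarith
  rw [real_inner_comm] at h6
  rw [real_inner_comm] at hζ2
  linarith

end FacetRep
namespace FacetRep

variable {d m : ℕ} (R : FacetRep d m)

lemma q_continuous (j : Fin m) : Continuous (fun x => R.q x j) := by
  unfold FacetRep.q qf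
  exact (continuous_const.sub (continuous_const.inner continuous_id)).div_const _

lemma q_pair (a b : ℝ) (hab : a + b = 1) (x₁ x₂ : E d) (j : Fin m) :
    R.q (a • x₁ + b • x₂) j = a * R.q x₁ j + b * R.q x₂ j := by
  unfold FacetRep.q qf
  rw [inner_add_right, real_inner_smul_right, real_inner_smul_right,
    ← mul_div_assoc, ← mul_div_assoc, ← add_div]
  congr 1
  linear_combination (-(supp R.P (R.u j))) * hab

lemma exists_vertex_act_subset (hd : 1 ≤ d) {y : E d} (hy : y ∈ R.P) :
    ∃ v ∈ vertices R.P, R.act y ⊆ R.act v := by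
  set F : Set (E d) := {p ∈ R.P | ∀ j ∈ R.act y, R.q p j = 0} with hF
  have hFsub : F ⊆ R.P := fun p hp => hp.1
  have hFcl : IsClosed F := by
    have : F = R.P ∩ ⋂ j ∈ R.act y, {p : E d | R.q p j = 0} := by
      ext p; simp [hF, Set.mem_iInter]
    rw [this]
    exact R.compact.isClosed.inter (isClosed_biInter fun j _ =>
      isClosed_eq (R.q_continuous j) continuous_const)
  have hFcompact : IsCompact F := R.compact.of_isClosed_subset hFcl hFsub
  have hFne : F.Nonempty := ⟨y, hy, fun j hj => (R.mem_act_iff y j).1 hj⟩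
  obtain ⟨v, hv⟩ := hFcompact.extremePoints_nonempty hFne
  have hvF : v ∈ F := hv.1
  refine ⟨v, ⟨hvF.1, ?_⟩, ?_⟩
  · intro x₁ hx₁ x₂ hx₂ hseg
    have hseg' := hseg
    obtain ⟨a, b, ha, hb, hab, hsum⟩ := hseg'
    have hq : ∀ j ∈ R.act y, R.q x₁ j = 0 ∧ R.q x₂ j = 0 := by
      intro j hj
      have h0 : a * R.q x₁ j + b * R.q x₂ j = 0 := by
        rw [← R.q_pair a b hab x₁ x₂ j, hsum]
        exact hvF.2 j hj
      have h1 : 0 ≤ a * R.q x₁ j := mul_nonneg (le_of_lt ha) (R.q_nonneg hx₁ j)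
      have h2 : 0 ≤ b * R.q x₂ j := mul_nonneg (le_of_lt hb) (R.q_nonneg hx₂ j)
      constructor
      · have : a * R.q x₁ j = 0 := by linarith
        rcases mul_eq_zero.1 this with h | h
        · linarith
        · exact h
      · have : b * R.q x₂ j = 0 := by linarith
        rcases mul_eq_zero.1 this with h | h
        · linarith
        · exact h
    exact hv.2 ⟨hx₁, fun j hj => (hq j hj).1⟩ ⟨hx₂, fun j hj => (hq j hj).2⟩ hseg
  · intro j hj
    exact (R.mem_act_iff v j).2 (hvF.2 j hj)

lemma one_sub_gam_le (V : Finset (E d)) (hV : (↑V : Set (E d)) = vertices R.P)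
    {v : E d} (hv : v ∈ V) {j : Fin m} (hj : R.q v j ≠ 0) :
    1 - R.q v j ≤ R.gam := by
  apply le_csSup
  · apply Set.Finite.bddAbove
    apply Set.Finite.subset ((V.finite_toSet.prod Set.finite_univ).image
      (fun p : E d × Fin m => 1 - R.q p.1 p.2))
    rintro c ⟨w, hw, j', hj', rfl⟩
    exact ⟨(w, j'), ⟨by rwa [hV], Set.mem_univ _⟩, rfl⟩
  · exact ⟨v, by rw [← hV]; exact hv, j, hj, rfl⟩

lemma step2 (hd : 1 ≤ d) (V : Finset (E d)) (hV : (↑V : Set (E d)) = vertices R.P)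
    (h1γ : 0 ≤ 1 - R.gam) {y : E d} (hy : y ∈ R.P) :
    ∃ v ∈ V, ∀ j ∉ R.act v, (1 - R.gam) / (1 + (d:ℝ)) ≤ R.q y j := by
  have hVP : (↑V : Set (E d)) ⊆ R.P := by rw [hV]; exact extremePoints_subset
  have hcl : IsClosed (convexHull ℝ (↑V : Set (E d))) :=
    (V.finite_toSet.isCompact_convexHull ℝ).isClosed
  have hPy : y ∈ convexHull ℝ (↑V : Set (E d)) := by
    have hKM : closure ((convexHull ℝ) (vertices R.P)) = R.P :=
      closure_convexHull_extremePoints R.compact R.convex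
    rw [← hV] at hKM
    rw [hcl.closure_eq] at hKM
    rw [hKM]
    exact hy
  rw [convexHull_eq_union] at hPy
  simp only [Set.mem_iUnion] at hPy
  obtain ⟨t, htV, hta, hyt⟩ := hPy
  have hcard : (t.card : ℝ) ≤ 1 + (d:ℝ) := by
    have h1 := hta.card_le_finrank_succ
    have h2 : Module.finrank ℝ (vectorSpan ℝ (Set.range ((↑) : ↥t → E d)))
        ≤ Module.finrank ℝ (E d) := Submodule.finrank_le _
    have h3 : Module.finrank ℝ (E d) = d := by
      rw [finrank_euclideanSpace, Fintype.card_fin]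
    rw [Fintype.card_coe] at h1
    have h4 : t.card ≤ d + 1 := by omega
    have h5 : (t.card : ℝ) ≤ (d : ℝ) + 1 := by exact_mod_cast h4
    linarith
  rw [Finset.mem_convexHull'] at hyt
  obtain ⟨w, hw0, hw1, hwsum⟩ := hyt
  have htne : t.Nonempty := Finset.nonempty_of_ne_empty (by rintro rfl; simp at hw1)
  have hcard0 : 0 < (t.card : ℝ) := by
    exact_mod_cast Finset.card_pos.2 htne
  obtain ⟨v, hvt, hwv⟩ := Finset.exists_le_of_sum_le htne
    (show ∑ _i ∈ t, 1/(t.card:ℝ) ≤ ∑ i ∈ t, w i by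
      rw [Finset.sum_const, hw1, nsmul_eq_mul]
      field_simp
      exact le_rfl)
  refine ⟨v, htV hvt, ?_⟩
  intro j hj
  have hvP : v ∈ R.P := hVP (htV hvt)
  have hqv : 1 - R.gam ≤ R.q v j := by
    have hne : R.q v j ≠ 0 := by
      intro hc
      exact hj ((R.mem_act_iff v j).2 hc)
    linarith [R.one_sub_gam_le V hV (htV hvt) hne]
  have hqy : R.q y j = ∑ i ∈ t, w i * R.q i j := by
    rw [← hwsum]
    exact R.q_combo t w (fun i => i) hw1 j
  have hsingle : w v * R.q v j ≤ ∑ i ∈ t, w i * R.q i j :=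
    Finset.single_le_sum (fun i hi =>
      mul_nonneg (hw0 i hi) (R.q_nonneg (hVP (htV hi)) j)) hvt
  have hstep : (1/(t.card:ℝ)) * (1 - R.gam) ≤ w v * R.q v j :=
    mul_le_mul hwv hqv h1γ (le_trans (by positivity) hwv)
  have hfrac : (1 - R.gam) / (1 + (d:ℝ)) ≤ (1/(t.card:ℝ)) * (1 - R.gam) := by
    rw [one_div, inv_mul_eq_div]
    exact div_le_div_of_nonneg_left h1γ hcard0 hcard
  rw [hqy]
  linarith

end FacetRep
theorem statement12 (d m : ℕ) (hd : 2 ≤ d) (R : FacetRep d m) (hs : R.Simple)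
    (V : Finset (E d)) (hV : (↑V : Set (E d)) = vertices R.P)
    (ε : ℝ) (hε : 0 < ε)
    (hδ : 0 < (1 - R.gam) / (1 + d) - ε * Real.sqrt d * alpha R V) :
    R.Peps ε = ⋃ v ∈ (↑V : Set (E d)),
      R.Pv v ε ((1 - R.gam) / (1 + d) - ε * Real.sqrt d * alpha R V) := by
  have hd1 : 1 ≤ d := by omega
  have hεα : 0 ≤ ε * Real.sqrt d * alpha R V :=
    mul_nonneg (mul_nonneg hε.le (Real.sqrt_nonneg _)) (alpha_nonneg R V)
  have hdpos : (0:ℝ) < 1 + (d:ℝ) := by positivity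
  have h1γ : 0 ≤ 1 - R.gam := by
    have h2 : 0 < (1 - R.gam) / (1 + (d:ℝ)) := by linarith
    by_contra hcon
    push_neg at hcon
    have : (1 - R.gam) / (1 + (d:ℝ)) < 0 := div_neg_of_neg_of_pos (by linarith) hdpos
    linarith
  have hD := R.diam_pos hd1
  ext x
  simp only [Set.mem_iUnion, Finset.mem_coe]
  constructor
  · intro hx
    have hx' : ∀ j, -ε ≤ R.q x j := hx
    obtain ⟨y, hyP, μ, hμ0, hμsum⟩ := R.proj_cone hd1 x
    obtain ⟨v', hv', hsub⟩ := R.exists_vertex_act_subset hd1 hyP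
    have hv'V : v' ∈ V := by rw [← Finset.mem_coe, hV]; exact hv'
    have hcard : (R.act v').card = d := hs v' hv'
    set D := Metric.diam R.P with hDdef
    set μ' : Fin m → ℝ := fun j => if j ∈ R.act y then μ j else 0 with hμ'
    have hμ'0 : ∀ j, 0 ≤ μ' j := by
      intro j; rw [hμ']; dsimp only; split
      · exact hμ0 j
      · exact le_refl 0
    have hxy : x - y = ∑ j ∈ R.act v', μ' j • R.u j := by
      have e1 : ∑ j ∈ R.act y, μ j • R.u j = ∑ j ∈ R.act y, μ' j • R.u j :=
        Finset.sum_congr rfl fun j hj => by rw [hμ']; simp [hj]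
      have e2 : ∑ j ∈ R.act y, μ' j • R.u j = ∑ j ∈ R.act v', μ' j • R.u j :=
        Finset.sum_subset hsub (fun j _ hjy => by rw [hμ']; simp [hjy])
      rw [hμsum, e1, e2]
    have hterm : ∀ j ∈ R.act v', μ' j * ⟪R.u j, x - y⟫ ≤ (ε * D) * μ' j := by
      intro j hj
      by_cases hjy : j ∈ R.act y
      · have h1 : ⟪R.u j, x - y⟫ = -(R.q x j) * D := by
          rw [inner_sub_right, R.act_inner hd1 hjy]
          unfold FacetRep.q qf
          rw [← hDdef, neg_mul, div_mul_cancel₀ _ hD.ne']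
          ring
        have h2 : ⟪R.u j, x - y⟫ ≤ ε * D := by
          rw [h1]
          have := hx' j
          nlinarith
        have := mul_le_mul_of_nonneg_left h2 (hμ'0 j)
        linarith
      · simp [hμ', hjy]
    have hnormsq : ‖x - y‖^2 ≤ (ε * D) * ∑ j ∈ R.act v', μ' j := by
      have h1 : ‖x - y‖^2 = ∑ j ∈ R.act v', μ' j * ⟪R.u j, x - y⟫ := by
        have e3 : ∑ j ∈ R.act v', μ' j * ⟪R.u j, x - y⟫
            = ⟪∑ j ∈ R.act v', μ' j • R.u j, x - y⟫ := by
          rw [sum_inner]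
          exact Finset.sum_congr rfl fun j _ => (real_inner_smul_left _ _ _).symm
        rw [e3, ← hxy, real_inner_self_eq_norm_sq]
      rw [h1, Finset.mul_sum]
      exact Finset.sum_le_sum hterm
    have hsumnn : 0 ≤ ∑ j ∈ R.act v', μ' j := Finset.sum_nonneg fun j _ => hμ'0 j
    have hCS : ∑ j ∈ R.act v', μ' j
        ≤ Real.sqrt d * Real.sqrt (∑ j ∈ R.act v', (μ' j)^2) := by
      have h1 : (∑ j ∈ R.act v', μ' j)^2 ≤ (R.act v').card * ∑ j ∈ R.act v', (μ' j)^2 :=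
        sq_sum_le_card_mul_sum_sq
      rw [hcard] at h1
      have h2 : ∑ j ∈ R.act v', μ' j = Real.sqrt ((∑ j ∈ R.act v', μ' j)^2) :=
        (Real.sqrt_sq hsumnn).symm
      rw [h2, ← Real.sqrt_mul_self (Real.sqrt_nonneg (d:ℝ)), Real.sqrt_mul_self (Real.sqrt_nonneg _)]
      rw [← Real.sqrt_mul (by positivity)]
      exact Real.sqrt_le_sqrt (by exact_mod_cast h1)
    have htr := R.transpose_bound hd1 hv' hcard μ'
    rw [← hxy] at htr
    have hβα : invNormU R.u (R.act v') ≤ alpha R V := invNormU_le_alpha R V hv'V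
    have hβnn : 0 ≤ invNormU R.u (R.act v') := invNormU_nonneg _ _
    have hnn : 0 ≤ ‖x - y‖ := norm_nonneg _
    set β := invNormU R.u (R.act v')
    set a := ‖x - y‖
    have h4 : a^2 ≤ (ε * D) * (Real.sqrt d * (β * a)) := by
      calc a^2 ≤ (ε * D) * ∑ j ∈ R.act v', μ' j := hnormsq
        _ ≤ (ε * D) * (Real.sqrt d * Real.sqrt (∑ j ∈ R.act v', (μ' j)^2)) :=
            mul_le_mul_of_nonneg_left hCS (by positivity)
        _ ≤ (ε * D) * (Real.sqrt d * (β * a)) := by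
            apply mul_le_mul_of_nonneg_left _ (by positivity)
            exact mul_le_mul_of_nonneg_left htr (Real.sqrt_nonneg _)
    have h5 : a ≤ ε * D * (Real.sqrt d * β) := by
      rcases eq_or_lt_of_le hnn with h | h
      · rw [← h]; positivity
      · have h6 : a * a ≤ (ε * D * (Real.sqrt d * β)) * a := by nlinarith
        exact le_of_mul_le_mul_right h6 h
    have h7 : a ≤ ε * D * (Real.sqrt d * alpha R V) := by
      have := mul_le_mul_of_nonneg_left hβα
        (show (0:ℝ) ≤ ε * D * Real.sqrt d by positivity)
      nlinarith [Real.sqrt_nonneg (d:ℝ)]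
    obtain ⟨v, hvV, hstep⟩ := R.step2 hd1 V hV h1γ hyP
    refine ⟨v, hvV, ?_, ?_⟩
    · intro j _
      exact hx' j
    · intro j hj
      have h1 := hstep j hj
      have h2 := R.q_lower hd1 x y j
      have h3 : ‖x - y‖ / D ≤ ε * Real.sqrt d * alpha R V := by
        rw [div_le_iff₀ hD]
        calc a ≤ ε * D * (Real.sqrt d * alpha R V) := h7
          _ = ε * Real.sqrt d * alpha R V * D := by ring
      rw [← hDdef] at h2
      linarith
  · rintro ⟨v, hvV, hxv⟩ j
    by_cases hj : j ∈ R.act v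
    · exact hxv.1 j hj
    · have h1 := hxv.2 j hj
      linarith
end AverkovHenk
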